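/- Stability of injectivity on moving hyperplanes: Let E be a finite-dimensional real inner product space, x₀ ∈ E nonzero, and φ₀ ∈ L(E,E) injective on x₀^⊥. Then for all x sufficiently close to x₀ and all φ sufficiently close to φ₀ (in operator norm), φ is injective on x^⊥. -/

import Mathlib

open RealInnerProductSpace

/-- Stability of injectivity on moving hyperplanes: if `φ₀` is injective on `x₀ ^⊥`
with `x₀ ≠ 0`, then every `φ` close to `φ₀` is injective on `x ^⊥` for every `x`
close to `x₀`. -/
theorem injOn_orthogonal_stable {E : Type*} [NormedAddCommGroup E]
    [InnerProductSpace ℝ E] [FiniteDimensional ℝ E]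
    {x₀ : E} (hx₀ : x₀ ≠ 0) {φ₀ : E →L[ℝ] E}
    (hφ₀ : Set.InjOn φ₀ ((ℝ ∙ x₀)ᗮ : Set E)) :
    ∃ ε > (0 : ℝ), ∀ x : E, ∀ φ : E →L[ℝ] E, ‖x - x₀‖ < ε → ‖φ - φ₀‖ < ε →
      Set.InjOn φ ((ℝ ∙ x)ᗮ : Set E) := by
  classical
  set K : Submodule ℝ E := (ℝ ∙ x₀)ᗮ with hK
  -- the restriction of φ₀ to K is injective
  have hinj : Function.Injective (φ₀.toLinearMap.comp K.subtype) := by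
    intro a b hab
    exact Subtype.ext (hφ₀ a.2 b.2 hab)
  obtain ⟨C, C0, hC⟩ :=
    (LinearMap.injective_iff_antilipschitz (φ₀.toLinearMap.comp K.subtype)).mp hinj
  -- quantitative lower bound on K
  have key : ∀ v : E, v ∈ K → ‖v‖ ≤ (C : ℝ) * ‖φ₀ v‖ := by
    intro v hv
    have := hC.le_mul_dist (⟨v, hv⟩ : K) 0
    simpa [dist_eq_norm] using this
  set c : ℝ := (C : ℝ)⁻¹ with hc
  have hCpos : (0 : ℝ) < (C : ℝ) := by exact_mod_cast C0
  have hcpos : 0 < c := by positivity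
  have key' : ∀ v : E, v ∈ K → c * ‖v‖ ≤ ‖φ₀ v‖ := by
    intro v hv
    rw [hc, inv_mul_le_iff₀ hCpos]
    linarith [key v hv]
  set r : ℝ := ‖x₀‖ with hr
  have hrpos : 0 < r := norm_pos_iff.mpr hx₀
  set M : ℝ := ‖φ₀‖ with hM
  have hM0 : 0 ≤ M := norm_nonneg _
  set D : ℝ := c + M + r + 1 with hD
  have hDpos : 0 < D := by positivity
  refine ⟨c * r / D, by positivity, ?_⟩
  intro x φ hx hφ
  set ε : ℝ := c * r / D with hε
  have hεpos : 0 < ε := by positivity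
  -- main step: φ vanishes at no nonzero point of (ℝ ∙ x)ᗮ
  have main : ∀ y : E, y ∈ (ℝ ∙ x)ᗮ → φ y = 0 → y = 0 := by
    intro y hy hφy
    by_contra hy0
    have hny : 0 < ‖y‖ := norm_pos_iff.mpr hy0
    have hxy : ⟪y, x⟫ = 0 :=
      Submodule.mem_orthogonal_singleton_iff_inner_left.mp hy
    have hxy' : ⟪x, y⟫ = 0 := by rw [real_inner_comm]; exact hxy
    have hr2 : r ^ 2 ≠ 0 := by positivity
    set t : ℝ := ⟪x₀, y⟫ / r ^ 2 with ht
    set y' : E := y - t • x₀ with hy'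
    have hy'K : y' ∈ K := by
      rw [hK, Submodule.mem_orthogonal_singleton_iff_inner_left]
      have hrr : ⟪x₀, x₀⟫ = r ^ 2 := by rw [hr, ← real_inner_self_eq_norm_sq]
      rw [hy', inner_sub_left, real_inner_smul_left, hrr, real_inner_comm x₀ y, ht]
      field_simp
      ring
    -- bound on the inner product
    have hinner : |⟪x₀, y⟫| ≤ ε * ‖y‖ := by
      have heq : ⟪x₀, y⟫ = ⟪x₀ - x, y⟫ := by
        rw [inner_sub_left, hxy']; ring
      rw [heq]
      calc |⟪x₀ - x, y⟫| ≤ ‖x₀ - x‖ * ‖y‖ := abs_real_inner_le_norm _ _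
        _ ≤ ε * ‖y‖ := by
            apply mul_le_mul_of_nonneg_right _ (norm_nonneg y)
            rw [← norm_neg (x₀ - x)]
            simpa using hx.le
    have habs_t : |t| ≤ ε * ‖y‖ / r ^ 2 := by
      rw [ht, abs_div, abs_of_pos (show (0:ℝ) < r ^ 2 by positivity)]
      gcongr
    have hd : ‖y - y'‖ ≤ ε * ‖y‖ / r := by
      have hyy : y - y' = t • x₀ := by rw [hy']; abel
      rw [hyy, norm_smul, Real.norm_eq_abs, ← hr]
      calc |t| * r ≤ (ε * ‖y‖ / r ^ 2) * r :=
            mul_le_mul_of_nonneg_right habs_t hrpos.le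
        _ = ε * ‖y‖ / r := by field_simp
    have hn' : ‖y‖ - ε * ‖y‖ / r ≤ ‖y'‖ := by
      have := norm_sub_norm_le y (y - y')
      simp only [sub_sub_cancel] at this
      linarith
    -- decompose φ₀ y'
    have hdecomp : φ₀ y' = -(φ₀ (y - y') + (φ - φ₀) y) := by
      have h2 : (φ - φ₀) y = φ y - φ₀ y := by simp
      have h3 : φ₀ (y - y') = φ₀ y - φ₀ y' := map_sub _ _ _
      rw [h2, h3, hφy]; abel
    have hb1 : ‖φ₀ y'‖ ≤ M * (ε * ‖y‖ / r) + ε * ‖y‖ := by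
      rw [hdecomp, norm_neg]
      have e1 : ‖φ₀ (y - y')‖ ≤ M * (ε * ‖y‖ / r) := by
        calc ‖φ₀ (y - y')‖ ≤ M * ‖y - y'‖ := φ₀.le_opNorm _
          _ ≤ M * (ε * ‖y‖ / r) := mul_le_mul_of_nonneg_left hd hM0
      have e2 : ‖(φ - φ₀) y‖ ≤ ε * ‖y‖ := by
        calc ‖(φ - φ₀) y‖ ≤ ‖φ - φ₀‖ * ‖y‖ := (φ - φ₀).le_opNorm _
          _ ≤ ε * ‖y‖ := mul_le_mul_of_nonneg_right hφ.le (norm_nonneg _)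
      exact (norm_add_le _ _).trans (add_le_add e1 e2)
    have hb2 : c * ‖y'‖ ≤ ‖φ₀ y'‖ := key' y' hy'K
    -- arithmetic contradiction
    set q : ℝ := ε * ‖y‖ / r with hq
    have hqr : q * r = ε * ‖y‖ := by rw [hq]; field_simp
    have hq0 : 0 ≤ q := by positivity
    have harith : c * (‖y‖ - q) ≤ M * q + ε * ‖y‖ := by
      calc c * (‖y‖ - q) ≤ c * ‖y'‖ := mul_le_mul_of_nonneg_left hn' hcpos.le
        _ ≤ ‖φ₀ y'‖ := hb2
        _ ≤ M * q + ε * ‖y‖ := hb1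
    have hεD : ε * D = c * r := by rw [hε]; field_simp
    have step1 : c * ‖y‖ * r ≤ ε * ‖y‖ * (c + M + r) := by
      nlinarith [mul_le_mul_of_nonneg_right harith hrpos.le, hqr]
    have step2 : c * ‖y‖ * r * D ≤ c * r * ‖y‖ * (c + M + r) := by
      calc c * ‖y‖ * r * D ≤ ε * ‖y‖ * (c + M + r) * D :=
            mul_le_mul_of_nonneg_right step1 hDpos.le
        _ = c * r * ‖y‖ * (c + M + r) := by
            linear_combination ‖y‖ * (c + M + r) * hεD
    have hpos : (0 : ℝ) < c * ‖y‖ * r := by positivity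
    have step3 : c * ‖y‖ * r * D - c * r * ‖y‖ * (c + M + r) = c * ‖y‖ * r := by
      rw [hD]; ring
    linarith [step2, hpos, step3]
  intro a ha b hb hab
  have hsub : a - b ∈ (ℝ ∙ x)ᗮ := Submodule.sub_mem _ ha hb
  have hz : φ (a - b) = 0 := by rw [map_sub, hab, sub_self]
  exact sub_eq_zero.mp (main (a - b) hsub hz)
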